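/- The iterates of a map f : X → H₀M (Y ⊕ X) form an ω-chain: for every n and every x ∈ X, f⁽ⁿ⁾ x ⊑ f⁽ⁿ⁺¹⁾ x. -/

import Mathlib

open scoped ENNReal NNReal
open Classical

universe u v w

/-- Raw trajectories: a duration in `ℝ≥0∞` and a partial evolution `ℝ≥0 → Option X`. -/
abbrev Traj (X : Type u) := ℝ≥0∞ × (ℝ≥0 → Option X)

/-- The flattening condition: if the duration is finite, the evolution is constant
from the duration onwards.  Membership in `H₀M X` means exactly `Flat`. -/
def Flat {X : Type u} (p : Traj X) : Prop :=
  ∀ t : ℝ≥0, p.1 ≤ (t : ℝ≥0∞) → p.2 t = p.2 p.1.toNNReal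

/-- The unit of `H₀M`. -/
def eta {X : Type u} (x : X) : Traj X := (0, fun _ => some x)

/-- The Kleisli lifting `f^†` of the monad `H₀M`. -/
noncomputable def kl {X : Type u} {Y : Type v} (f : X → Traj Y) (p : Traj X) : Traj Y :=
  if p.1 = ⊤ then (p.1, fun t => (p.2 t).bind fun x' => (f x').2 0)
  else
    match p.2 p.1.toNNReal with
    | none => (p.1, fun t => (p.2 t).bind fun x' => (f x').2 0)
    | some x =>
        (p.1 + (f x).1,
          fun t =>
            if (t : ℝ≥0∞) < p.1 then (p.2 t).bind fun x' => (f x').2 0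
            else (f x).2 (t - p.1.toNNReal))

/-- Membership in `H₊ X ⊆ H₀M X`: the evolution is not everywhere `none`, and it is
defined at every time instant strictly below the duration. -/
def memHp {X : Type u} (p : Traj X) : Prop :=
  p.2 ≠ (fun _ => none) ∧ ∀ t : ℝ≥0, (t : ℝ≥0∞) < p.1 → p.2 t ≠ none

/-- Membership in `H X ⊆ H₀M X`: either the evolution is total, or the duration is `∞`
and the domain of the evolution is downward closed. -/
def memH {X : Type u} (p : Traj X) : Prop :=
  (∀ t, p.2 t ≠ none) ∨
    (p.1 = ⊤ ∧ ∀ s t : ℝ≥0, s ≤ t → p.2 t ≠ none → p.2 s ≠ none)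

/-- The approximation order `⊑` on `H₀M X`. -/
def TrajLE {X : Type u} (p q : Traj X) : Prop :=
  p.1 ≤ q.1 ∧ (∀ t, p.2 t ≠ none → q.2 t = p.2 t) ∧
    (p.1 ≠ ⊤ → p.2 p.1.toNNReal ≠ none → p.1 = q.1)

/-- Join of an ω-chain in `H₀M X`: the duration is the supremum of the durations, and
the evolution at `t` is the common value `(c i).2 t` whenever it is `≠ none` for some
`i`, and `none` otherwise. -/
noncomputable def chainJoin {X : Type u} (c : ℕ → Traj X) : Traj X :=
  (⨆ i, (c i).1,
    fun t => if h : ∃ i, (c i).2 t ≠ none then (c h.choose).2 t else none)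

/-- `d⋆ = sup { s < d ∣ e is defined on [0, s) }`. -/
noncomputable def dstar {X : Type u} (p : Traj X) : ℝ≥0∞ :=
  sSup {s : ℝ≥0∞ | s < p.1 ∧ ∀ t : ℝ≥0, (t : ℝ≥0∞) < s → p.2 t ≠ none}

/-- The retraction `ρ : H₀M X → H₀M X` onto `H X`. -/
noncomputable def rho {X : Type u} (p : Traj X) : Traj X :=
  ((if ∀ t, p.2 t ≠ none then p.1 else ⊤),
    fun t =>
      if (t : ℝ≥0∞) ≤ dstar p then p.2 t
      else if ∀ t', p.2 t' ≠ none then p.2 (dstar p).toNNReal else none)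

/-- The iterates `f⁽ⁿ⁾` of `f : X → H₀M (Y ⊕ X)`. -/
noncomputable def iter {X Y : Type u} (f : X → Traj (Y ⊕ X)) : ℕ → X → Traj Y
  | 0, _ => (0, fun _ => none)
  | n + 1, x => kl (Sum.elim eta (iter f n)) (f x)

/-- The least-fixpoint iteration `f^‡ x = ⊔ₙ f⁽ⁿ⁾ x`. -/
noncomputable def iterStar {X Y : Type u} (f : X → Traj (Y ⊕ X)) (x : X) : Traj Y :=
  chainJoin fun n => iter f n x

/-- `f : X → H₊ (A ⊕ B)` is progressive in `B` (guarded in the second summand). -/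
def Prog {X : Type u} {A B : Type v} (f : X → Traj (A ⊕ B)) : Prop :=
  ∀ x, ∃ a : A, (f x).2 0 = some (Sum.inl a)

theorem TrajLE.refl' {X : Type u} (p : Traj X) : TrajLE p p :=
  ⟨le_rfl, fun _ _ => rfl, fun _ _ => rfl⟩

theorem kl_mono {X : Type u} {Y : Type v} (g g' : X → Traj Y)
    (hgg' : ∀ x, TrajLE (g x) (g' x)) (p : Traj X) :
    TrajLE (kl g p) (kl g' p) := by
  by_cases htop : p.1 = ⊤
  · unfold kl
    rw [if_pos htop, if_pos htop]
    refine ⟨le_rfl, fun t ht => ?_, fun h => absurd htop h⟩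
    simp only at ht ⊢
    cases hp : p.2 t with
    | none => simp [hp] at ht
    | some x' =>
      simp only [hp, Option.bind_some] at ht ⊢
      exact (hgg' x').2.1 0 ht
  · unfold kl
    rw [if_neg htop, if_neg htop]
    cases hm : p.2 p.1.toNNReal with
    | none =>
      dsimp only
      refine ⟨le_rfl, fun t ht => ?_, fun _ h => ?_⟩
      · cases hp : p.2 t with
        | none => simp [hp] at ht
        | some x' =>
          simp only [hp, Option.bind_some] at ht ⊢
          exact (hgg' x').2.1 0 ht
      · simp [hm] at h
    | some x =>
      dsimp only
      refine ⟨add_le_add_right (hgg' x).1 _, fun t ht => ?_, fun h1 h2 => ?_⟩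
      · by_cases hlt : (t : ℝ≥0∞) < p.1
        · simp only [if_pos hlt] at ht ⊢
          cases hp : p.2 t with
          | none => simp [hp] at ht
          | some x' =>
            simp only [hp, Option.bind_some] at ht ⊢
            exact (hgg' x').2.1 0 ht
        · simp only [if_neg hlt] at ht ⊢
          exact (hgg' x).2.1 _ ht
      · have hgx : (g x).1 ≠ ⊤ := fun h => h1 (by simp [h])
        have hT : (((p.1 + (g x).1).toNNReal : ℝ≥0) : ℝ≥0∞) = p.1 + (g x).1 :=
          ENNReal.coe_toNNReal h1
        have hnlt : ¬ (((p.1 + (g x).1).toNNReal : ℝ≥0) : ℝ≥0∞) < p.1 := by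
          rw [hT]; exact not_lt.2 le_self_add
        simp only [if_neg hnlt] at h2
        have hsub : (p.1 + (g x).1).toNNReal - p.1.toNNReal = (g x).1.toNNReal := by
          rw [ENNReal.toNNReal_add htop hgx, add_tsub_cancel_left]
        rw [hsub] at h2
        have := (hgg' x).2.2 hgx h2
        rw [this]

theorem iter_chain {X Y : Type u} (f : X → Traj (Y ⊕ X)) (hf : ∀ x, Flat (f x))
    (n : ℕ) (x : X) :
    TrajLE (iter f n x) (iter f (n + 1) x) := by
  induction n generalizing x with
  | zero =>
    refine ⟨zero_le, fun t ht => absurd rfl ht, fun _ h => absurd rfl h⟩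
  | succ n ih =>
    exact kl_mono _ _ (fun z => by cases z with
      | inl y => exact TrajLE.refl' _
      | inr x' => exact ih x') (f x)
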